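/- arXiv:2403.05644 — 2 statements merged into one kernel-verified Lean document; each statement's English description precedes it below -/
import Mathlib

section
/- In the setting of penalized least squares on a finite-dimensional subspace S of an inner product space H, let s_0 be the (unpenalized) orthogonal projection of y onto S and s_λ the minimizer of ‖y - s‖² + λ E(s) for λ > 0. Then ‖s_0 - s_λ‖² = λ ⟨s_λ, s_0 - s_λ⟩_E, and consequently ‖s_λ‖_E ≤ ‖s_0‖_E, where ‖s‖_E = ⟨s,s⟩_E^{1/2}. -/
open scoped RealInnerProductSpace

lemma quad_zero (a b : ℝ) (hb : 0 ≤ b) (h : ∀ t : ℝ, 0 ≤ t ^ 2 * b - 2 * t * a) :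
    a = 0 := by
  by_contra ha
  have ha2 : 0 < a ^ 2 := by positivity
  have hb1 : (0:ℝ) < b + 1 := by linarith
  have hne : (b+1) ≠ 0 := by linarith
  have ht := h (a / (b + 1))
  rw [div_pow] at ht
  have h2 : 0 ≤ (a ^ 2 / (b+1)^2 * b - 2 * (a / (b+1)) * a) * (b+1)^2 :=
    mul_nonneg ht (by positivity)
  have e1 : (a ^ 2 / (b+1)^2 * b - 2 * (a / (b+1)) * a) * (b+1)^2
      = a^2*b - 2*a^2*(b+1) := by field_simp
  rw [e1] at h2
  nlinarith [h2, ha2, hb]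



/-- With s₀ the unpenalized least-squares solution (orthogonal projection of y
onto S) and s_λ the λ-penalized minimizer (λ > 0), we have
‖s₀ - s_λ‖² = λ ⟨s_λ, s₀ - s_λ⟩_E and consequently ‖s_λ‖_E ≤ ‖s₀‖_E. -/
theorem penalized_ls_energy_decrease {H : Type*} [NormedAddCommGroup H]
    [InnerProductSpace ℝ H] (S : Submodule ℝ H) [FiniteDimensional ℝ S]
    (B : S →ₗ[ℝ] S →ₗ[ℝ] ℝ) (hsymm : ∀ a b : S, B a b = B b a)
    (hpos : ∀ a : S, 0 ≤ B a a) (y : H) (lam : ℝ) (hlam : 0 < lam)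
    (s0 slam : S)
    (hmin0 : ∀ s : S, ‖y - (s0 : H)‖ ^ 2 ≤ ‖y - (s : H)‖ ^ 2)
    (hminlam : ∀ s : S, ‖y - (slam : H)‖ ^ 2 + lam * B slam slam ≤
      ‖y - (s : H)‖ ^ 2 + lam * B s s) :
    ‖(s0 : H) - (slam : H)‖ ^ 2 = lam * B slam (s0 - slam) ∧
      Real.sqrt (B slam slam) ≤ Real.sqrt (B s0 s0) := by
  -- orthogonality for s0
  have horth0 : ∀ u : S, ⟪y - (s0 : H), (u : H)⟫ = 0 := by
    intro u
    apply quad_zero _ (‖(u : H)‖ ^ 2) (sq_nonneg _)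
    intro t
    have h1 := hmin0 (s0 + t • u)
    have hc : ((s0 + t • u : S) : H) = (s0 : H) + t • (u : H) := by push_cast; ring_nf
    rw [hc] at h1
    have he : ‖y - ((s0 : H) + t • (u : H))‖ ^ 2
        = ‖y - (s0 : H)‖ ^ 2 - 2 * (t * ⟪y - (s0 : H), (u : H)⟫) + t ^ 2 * ‖(u : H)‖ ^ 2 := by
      have : y - ((s0 : H) + t • (u : H)) = (y - (s0 : H)) - t • (u : H) := by abel
      rw [this, norm_sub_sq_real, real_inner_smul_right, norm_smul]
      simp [mul_pow, abs_mul_abs_self]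
    rw [he] at h1
    linarith
  -- orthogonality for slam
  have horthl : ∀ u : S, ⟪y - (slam : H), (u : H)⟫ - lam * B slam u = 0 := by
    intro u
    apply quad_zero _ (‖(u : H)‖ ^ 2 + lam * B u u)
      (by have := hpos u; positivity)
    intro t
    have h1 := hminlam (slam + t • u)
    have hc : ((slam + t • u : S) : H) = (slam : H) + t • (u : H) := by push_cast; ring_nf
    rw [hc] at h1
    have he : ‖y - ((slam : H) + t • (u : H))‖ ^ 2
        = ‖y - (slam : H)‖ ^ 2 - 2 * (t * ⟪y - (slam : H), (u : H)⟫) + t ^ 2 * ‖(u : H)‖ ^ 2 := by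
      have : y - ((slam : H) + t • (u : H)) = (y - (slam : H)) - t • (u : H) := by abel
      rw [this, norm_sub_sq_real, real_inner_smul_right, norm_smul]
      simp [mul_pow, abs_mul_abs_self]
    have hB : B (slam + t • u) (slam + t • u)
        = B slam slam + 2 * t * B slam u + t ^ 2 * B u u := by
      simp [map_add, map_smul, smul_eq_mul, hsymm u slam]
      ring_nf
    rw [he, hB] at h1
    nlinarith [h1]
  -- first claim
  have hd : (((s0 - slam : S) : H)) = (s0 : H) - (slam : H) := by push_cast; ring_nf
  have key : ‖(s0 : H) - (slam : H)‖ ^ 2 = lam * B slam (s0 - slam) := by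
    have h0 := horth0 (s0 - slam)
    have hl := horthl (s0 - slam)
    rw [hd] at h0 hl
    have : ⟪(s0 : H) - (slam : H), (s0 : H) - (slam : H)⟫
        = ⟪y - (slam : H), (s0 : H) - (slam : H)⟫
          - ⟪y - (s0 : H), (s0 : H) - (slam : H)⟫ := by
      rw [← inner_sub_left]
      congr 1
      abel
    rw [← real_inner_self_eq_norm_sq, this, h0]
    linarith
  refine ⟨key, ?_⟩
  -- consequence
  have hnn : 0 ≤ B slam (s0 - slam) := by
    have h1 : 0 ≤ ‖(s0 : H) - (slam : H)‖ ^ 2 := sq_nonneg _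
    rw [key] at h1
    exact (mul_nonneg_iff_of_pos_left hlam).mp h1
  -- Cauchy-Schwarz for the semidefinite form
  have cs : (B slam s0) ^ 2 ≤ B slam slam * B s0 s0 := by
    have hq : ∀ t : ℝ, 0 ≤ B s0 s0 * (t * t) + (2 * B slam s0) * t + B slam slam := by
      intro t
      have := hpos (slam + t • s0)
      have hB : B (slam + t • s0) (slam + t • s0)
          = B slam slam + 2 * t * B slam s0 + t ^ 2 * B s0 s0 := by
        simp [map_add, map_smul, smul_eq_mul, hsymm s0 slam]
        ring_nf
      rw [hB] at this
      nlinarith [this]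
    have hd2 := discrim_le_zero hq
    rw [discrim] at hd2
    nlinarith [hd2]
  -- B slam slam ≤ B slam s0
  have hle : B slam slam ≤ B slam s0 := by
    have : B slam (s0 - slam) = B slam s0 - B slam slam := by
      simp [map_sub]
    rw [this] at hnn
    linarith
  apply Real.sqrt_le_sqrt
  rcases eq_or_lt_of_le (hpos slam) with h0 | h0
  · nlinarith [cs, hpos s0, hle]
  · nlinarith [cs, hle, h0]
end

section
/- With s_0 the orthogonal projection of y onto S and s_λ the λ-penalized minimizer, suppose there exists a constant V̄ > 0 such that ‖p‖_E ≤ V̄ ‖p‖ for all p ∈ S. Then ‖s_0 - s_λ‖ ≤ λ V̄ ‖s_λ‖_E ≤ λ V̄ ‖s_0‖_E. -/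
private lemma bilin_cs {S : Type*} [AddCommGroup S] [Module ℝ S]
    (B : S →ₗ[ℝ] S →ₗ[ℝ] ℝ) (hsymm : ∀ a b : S, B a b = B b a)
    (hpos : ∀ a : S, 0 ≤ B a a) (a b : S) :
    (B a b) ^ 2 ≤ B a a * B b b := by
  by_cases hb : B b b = 0
  · -- B a b must be 0
    have hab : B a b = 0 := by
      by_contra h
      have key : ∀ t : ℝ, 0 ≤ B a a + 2 * t * B a b := by
        intro t
        have h2 := hpos (a + t • b)
        simp only [map_add, map_smul, LinearMap.add_apply, LinearMap.smul_apply,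
          smul_eq_mul] at h2
        rw [hsymm b a, hb] at h2
        ring_nf at h2 ⊢
        linarith
      have ht := key (-(B a a + 1) / (2 * B a b))
      have heq : B a a + 2 * (-(B a a + 1) / (2 * B a b)) * B a b = -1 := by
        field_simp
        ring
      rw [heq] at ht
      linarith
    rw [hab, hb]; nlinarith [hpos a]
  · have hb' : 0 < B b b := lt_of_le_of_ne (hpos b) (Ne.symm hb)
    have h2 := hpos (B b b • a + (-(B a b)) • b)
    simp only [map_add, map_smul, LinearMap.add_apply, LinearMap.smul_apply,
      smul_eq_mul] at h2
    rw [hsymm b a] at h2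
    nlinarith [h2, hb']

private lemma bilin_cs_sqrt {S : Type*} [AddCommGroup S] [Module ℝ S]
    (B : S →ₗ[ℝ] S →ₗ[ℝ] ℝ) (hsymm : ∀ a b : S, B a b = B b a)
    (hpos : ∀ a : S, 0 ≤ B a a) (a b : S) :
    B a b ≤ Real.sqrt (B a a) * Real.sqrt (B b b) := by
  have h := bilin_cs B hsymm hpos a b
  have h1 : B a b ≤ Real.sqrt ((B a b) ^ 2) := by
    rw [Real.sqrt_sq_eq_abs]; exact le_abs_self _
  calc B a b ≤ Real.sqrt ((B a b) ^ 2) := h1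
    _ ≤ Real.sqrt (B a a * B b b) := Real.sqrt_le_sqrt h
    _ = Real.sqrt (B a a) * Real.sqrt (B b b) := Real.sqrt_mul (hpos a) _

/-- If ‖p‖_E ≤ V̄ ‖p‖ for all p ∈ S, then the unpenalized and penalized
least-squares solutions satisfy ‖s₀ - s_λ‖ ≤ λ V̄ ‖s_λ‖_E ≤ λ V̄ ‖s₀‖_E. -/
theorem penalized_ls_distance_bound {H : Type*} [NormedAddCommGroup H]
    [InnerProductSpace ℝ H] (S : Submodule ℝ H) [FiniteDimensional ℝ S]
    (B : S →ₗ[ℝ] S →ₗ[ℝ] ℝ) (hsymm : ∀ a b : S, B a b = B b a)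
    (hpos : ∀ a : S, 0 ≤ B a a) (y : H) (lam : ℝ) (hlam : 0 < lam)
    (Vbar : ℝ) (hVbar : 0 < Vbar)
    (hV : ∀ p : S, Real.sqrt (B p p) ≤ Vbar * ‖(p : H)‖)
    (s0 slam : S)
    (h0 : ∀ u : S, (inner ℝ (y - (s0 : H)) (u : H) : ℝ) = 0)
    (hlamchar : ∀ u : S,
      (inner ℝ (y - (slam : H)) (u : H) : ℝ) = lam * B slam u) :
    ‖(s0 : H) - (slam : H)‖ ≤ lam * Vbar * Real.sqrt (B slam slam) ∧
      lam * Vbar * Real.sqrt (B slam slam) ≤ lam * Vbar * Real.sqrt (B s0 s0) := by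
  set d : S := s0 - slam with hd
  have hdc : ((d : H)) = (s0 : H) - (slam : H) := by simp [hd]
  have key : ∀ u : S, (inner ℝ ((d : H)) (u : H) : ℝ) = lam * B slam u := by
    intro u
    have h1 := h0 u
    have h2 := hlamchar u
    have h3 : ((d : H)) = (y - (slam : H)) - (y - (s0 : H)) := by
      rw [hdc]; abel
    rw [h3, inner_sub_left, h1, h2, sub_zero]
  -- first inequality
  have hnorm : ‖(d : H)‖ ^ 2 = lam * B slam d := by
    rw [← key d, ← real_inner_self_eq_norm_sq]
  have hcs : B slam d ≤ Real.sqrt (B slam slam) * Real.sqrt (B d d) :=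
    bilin_cs_sqrt B hsymm hpos slam d
  have hVd := hV d
  have hsqnn : (0:ℝ) ≤ Real.sqrt (B slam slam) := Real.sqrt_nonneg _
  have hb1 : ‖(d : H)‖ ^ 2 ≤ lam * Vbar * Real.sqrt (B slam slam) * ‖(d : H)‖ := by
    calc ‖(d : H)‖ ^ 2 = lam * B slam d := hnorm
      _ ≤ lam * (Real.sqrt (B slam slam) * Real.sqrt (B d d)) :=
          mul_le_mul_of_nonneg_left hcs hlam.le
      _ ≤ lam * (Real.sqrt (B slam slam) * (Vbar * ‖(d : H)‖)) :=
          mul_le_mul_of_nonneg_left (mul_le_mul_of_nonneg_left hVd hsqnn) hlam.le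
      _ = lam * Vbar * Real.sqrt (B slam slam) * ‖(d : H)‖ := by ring
  have first : ‖(d : H)‖ ≤ lam * Vbar * Real.sqrt (B slam slam) := by
    rcases eq_or_lt_of_le (norm_nonneg (d : H)) with h | h
    · rw [← h]; positivity
    · nlinarith [hb1]
  -- second inequality
  have hpos' : 0 ≤ B slam d := by
    have : 0 ≤ lam * B slam d := by rw [← hnorm]; positivity
    nlinarith
  have hs0 : B slam slam ≤ B slam s0 := by
    have : B slam s0 = B slam slam + B slam d := by
      rw [hd]; simp [map_sub]
    nlinarith
  have hcs2 : B slam s0 ≤ Real.sqrt (B slam slam) * Real.sqrt (B s0 s0) :=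
    bilin_cs_sqrt B hsymm hpos slam s0
  have hsq : Real.sqrt (B slam slam) ≤ Real.sqrt (B s0 s0) := by
    rcases eq_or_lt_of_le hsqnn with h | h
    · rw [← h]; exact Real.sqrt_nonneg _
    · have hsqeq : Real.sqrt (B slam slam) ^ 2 = B slam slam :=
        Real.sq_sqrt (hpos slam)
      nlinarith [hs0, hcs2]
  constructor
  · rw [← hdc]; exact first
  · exact mul_le_mul_of_nonneg_left hsq (by positivity)
end
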